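/- Let M be a diamond with atoms A and f : M^n → ℝ submodular with f(0) = 0. Then min_{x ∈ M^n} f(x) = max { S(z) : z ∈ P_M(f), z ≤ 0 }, where S(z) = Σ_{i=1}^n ( min_{a ∈ A} z(i, a) + max_{a ∈ A} z(i, a) ). -/

import Mathlib

set_option linter.unreachableTactic false
set_option linter.unusedTactic false
set_option linter.unusedVariables false

inductive Dia (A : Type) : Type where
  | bot : Dia A
  | atom : A → Dia A
  | top : Dia A
  deriving DecidableEq

namespace Dia

variable {A : Type} [DecidableEq A]

instance : Lattice (Dia A) where
  le x y := x = bot ∨ y = top ∨ x = y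
  le_refl x := Or.inr (Or.inr rfl)
  le_trans x y z hxy hyz := by
    rcases hxy with h | h | h <;> rcases hyz with h' | h' | h' <;> simp_all
  le_antisymm x y hxy hyx := by
    rcases hxy with h | h | h <;> rcases hyx with h' | h' | h' <;> simp_all
  sup x y := if x = bot then y else if y = bot then x else if x = y then x else top
  inf x y := if x = top then y else if y = top then x else if x = y then x else bot
  le_sup_left x y := by
    try dsimp only
    split_ifs <;> (try simp_all) <;> (try split_ifs) <;> (try simp_all)
  le_sup_right x y := by
    try dsimp only
    split_ifs <;> (try simp_all) <;> (try split_ifs) <;> (try simp_all)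
  sup_le x y z hxz hyz := by
    try dsimp only
    rcases hxz with h | h | h <;> rcases hyz with h' | h' | h' <;> split_ifs <;> (try simp_all) <;> (try split_ifs) <;> (try simp_all)
  inf_le_left x y := by
    try dsimp only
    split_ifs <;> (try simp_all) <;> (try split_ifs) <;> (try simp_all)
  inf_le_right x y := by
    try dsimp only
    split_ifs <;> (try simp_all) <;> (try split_ifs) <;> (try simp_all)
  le_inf x y z hxy hxz := by
    try dsimp only
    rcases hxy with h | h | h <;> rcases hxz with h' | h' | h' <;> split_ifs <;> (try simp_all) <;> (try split_ifs) <;> (try simp_all)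

instance : BoundedOrder (Dia A) where
  top := top
  bot := bot
  le_top x := Or.inr (Or.inl rfl)
  bot_le x := Or.inl rfl

def drank : Dia A → ℕ
  | bot => 0
  | atom _ => 1
  | top => 2

noncomputable def gval (v : A → ℝ) : Dia A → ℝ
  | bot => 0
  | atom a => v a
  | top => sSup {r : ℝ | ∃ a a' : A, a ≠ a' ∧ r = v a + v a'}

end Dia

variable {A : Type} [DecidableEq A] {n : ℕ}

noncomputable def evalD (x : Fin n → A → ℝ) (y : Fin n → Dia A) : ℝ :=
  ∑ i, Dia.gval (x i) (y i)

def Submod (f : (Fin n → Dia A) → ℝ) : Prop :=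
  ∀ a b, f (a ⊓ b) + f (a ⊔ b) ≤ f a + f b

def InP (f : (Fin n → Dia A) → ℝ) (x : Fin n → A → ℝ) : Prop :=
  ∀ y, evalD x y ≤ f y

def UnifiedRow (v : A → ℝ) : Prop :=
  ∃ p : A, (∀ a b : A, a ≠ p → b ≠ p → v a = v b) ∧ ∀ a, v a ≤ v p

def Unified (x : Fin n → A → ℝ) : Prop := ∀ i, UnifiedRow (x i)


section Dev
variable {A : Type} [DecidableEq A] {n : ℕ}

namespace Dia

instance finiteDia [Fintype A] : Finite (Dia A) := by
  apply Finite.of_injective (fun d : Dia A => match d with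
    | bot => (none : Option (Option A))
    | atom a => some (some a)
    | top => some none)
  intro x y h
  cases x <;> cases y <;> simp_all

lemma le_def (x y : Dia A) : (x ≤ y) = (x = bot ∨ y = top ∨ x = y) := rfl
lemma sup_def (x y : Dia A) : x ⊔ y = if x = bot then y else if y = bot then x else if x = y then x else top := rfl
lemma inf_def (x y : Dia A) : x ⊓ y = if x = top then y else if y = top then x else if x = y then x else bot := rfl

@[simp] lemma bot_sup (d : Dia A) : Dia.bot ⊔ d = d := by rw [sup_def]; simp
@[simp] lemma sup_bot (d : Dia A) : d ⊔ Dia.bot = d := by rw [sup_def]; split_ifs <;> simp_all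
@[simp] lemma bot_inf (d : Dia A) : Dia.bot ⊓ d = Dia.bot := by rw [inf_def]; split_ifs <;> simp_all
@[simp] lemma inf_bot (d : Dia A) : d ⊓ Dia.bot = Dia.bot := by rw [inf_def]; split_ifs <;> simp_all
@[simp] lemma top_sup (d : Dia A) : Dia.top ⊔ d = Dia.top := by rw [sup_def]; split_ifs <;> simp_all
@[simp] lemma sup_top (d : Dia A) : d ⊔ Dia.top = Dia.top := by rw [sup_def]; split_ifs <;> simp_all
@[simp] lemma top_inf (d : Dia A) : Dia.top ⊓ d = d := by rw [inf_def]; simp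
@[simp] lemma inf_top (d : Dia A) : d ⊓ Dia.top = d := by rw [inf_def]; split_ifs <;> simp_all

lemma atom_sup_atom {a a' : A} (h : a ≠ a') : Dia.atom a ⊔ Dia.atom a' = Dia.top := by
  rw [sup_def]; simp_all
lemma atom_inf_atom {a a' : A} (h : a ≠ a') : Dia.atom a ⊓ Dia.atom a' = Dia.bot := by
  rw [inf_def]; simp_all

end Dia
end Dev
section Dev2
set_option linter.unusedSectionVars false
variable {A : Type} [DecidableEq A] [Fintype A] {n : ℕ}

namespace Dia

lemma pair_finite (v : A → ℝ) : {r : ℝ | ∃ a a' : A, a ≠ a' ∧ r = v a + v a'}.Finite := by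
  apply Set.Finite.subset (Set.finite_range (fun p : A × A => v p.1 + v p.2))
  rintro r ⟨a, a', _, rfl⟩; exact ⟨(a, a'), rfl⟩

lemma pair_nonempty (hA : 2 ≤ Fintype.card A) (v : A → ℝ) :
    {r : ℝ | ∃ a a' : A, a ≠ a' ∧ r = v a + v a'}.Nonempty := by
  obtain ⟨a, a', h⟩ := Fintype.one_lt_card_iff.mp hA
  exact ⟨v a + v a', a, a', h, rfl⟩

lemma le_gval_top (v : A → ℝ) {a a' : A} (h : a ≠ a') : v a + v a' ≤ gval v Dia.top :=
  le_csSup (pair_finite v).bddAbove ⟨a, a', h, rfl⟩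

lemma gval_top_le (hA : 2 ≤ Fintype.card A) {v : A → ℝ} {m : ℝ}
    (h : ∀ a a' : A, a ≠ a' → v a + v a' ≤ m) : gval v Dia.top ≤ m := by
  apply csSup_le (pair_nonempty hA v)
  rintro r ⟨a, a', hne, rfl⟩; exact h a a' hne

lemma gval_supermod (v : A → ℝ) (d d' : Dia A) :
    gval v d + gval v d' ≤ gval v (d ⊓ d') + gval v (d ⊔ d') := by
  cases d <;> cases d' <;> simp [gval, add_comm]
  case atom.atom a a' =>
    by_cases h : a = a'
    · subst h; simp [inf_def, sup_def, gval]
    · rw [atom_inf_atom h, atom_sup_atom h]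
      simpa [gval] using le_gval_top v h

end Dia
end Dev2
section Dev3
set_option linter.unusedSectionVars false
variable {A : Type} [DecidableEq A] [Fintype A] {n : ℕ}

namespace Dia

lemma row_le_gval (hA : 2 ≤ Fintype.card A) {v : A → ℝ} (h0 : ∀ a, v a ≤ 0) (d : Dia A) :
    sInf (Set.range v) + sSup (Set.range v) ≤ gval v d := by
  have hne : Nonempty A := Fintype.card_pos_iff.mp (by omega)
  have hrne : (Set.range v).Nonempty := Set.range_nonempty v
  have hfin : (Set.range v).Finite := Set.finite_range v
  have hsup_le : sSup (Set.range v) ≤ 0 := csSup_le hrne (by rintro r ⟨a, rfl⟩; exact h0 a)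
  have hinf_le : ∀ a, sInf (Set.range v) ≤ v a := fun a => csInf_le hfin.bddBelow ⟨a, rfl⟩
  cases d with
  | bot =>
    have := hinf_le (Classical.arbitrary A)
    have := h0 (Classical.arbitrary A)
    simp only [gval]; linarith
  | atom a =>
    simp only [gval]; have := hinf_le a; linarith
  | top =>
    obtain ⟨a, ha⟩ : sSup (Set.range v) ∈ Set.range v := hrne.csSup_mem hfin
    have : Nontrivial A := Fintype.one_lt_card_iff_nontrivial.mp hA
    obtain ⟨a', ha'⟩ := exists_ne a
    have h1 : v a + v a' ≤ gval v Dia.top := le_gval_top v (Ne.symm ha').elim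
    have := hinf_le a'
    simp only [gval] at *
    linarith

lemma two_level_sSup (hA : 2 ≤ Fintype.card A) {q : A} {t s : ℝ} (hst : s ≤ t) :
    sSup (Set.range (fun a => if a = q then t else s)) = t := by
  have hne : Nonempty A := Fintype.card_pos_iff.mp (by omega)
  apply le_antisymm
  · apply csSup_le (Set.range_nonempty _)
    rintro r ⟨a, rfl⟩; dsimp only; split_ifs <;> simp [hst]
  · exact le_csSup (Set.finite_range _).bddAbove ⟨q, by simp⟩

lemma two_level_sInf (hA : 2 ≤ Fintype.card A) {q : A} {t s : ℝ} (hst : s ≤ t) :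
    sInf (Set.range (fun a => if a = q then t else s)) = s := by
  have : Nontrivial A := Fintype.one_lt_card_iff_nontrivial.mp hA
  obtain ⟨a', ha'⟩ := exists_ne q
  apply le_antisymm
  · exact csInf_le (Set.finite_range _).bddBelow ⟨a', by simp [ha']⟩
  · apply le_csInf (Set.range_nonempty _)
    rintro r ⟨a, rfl⟩; dsimp only; split_ifs <;> simp [hst]

lemma two_level_gval_top (hA : 2 ≤ Fintype.card A) {q : A} {t s : ℝ} (hst : s ≤ t) :
    gval (fun a => if a = q then t else s) Dia.top = t + s := by
  have : Nontrivial A := Fintype.one_lt_card_iff_nontrivial.mp hA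
  obtain ⟨a', ha'⟩ := exists_ne q
  apply le_antisymm
  · apply gval_top_le hA
    intro a b hab; split_ifs with h1 h2
    · exact absurd (h1.trans h2.symm) hab
    all_goals linarith
  · have := le_gval_top (fun a => if a = q then t else s) (fun h : q = a' => ha' h.symm)
    simpa [ha'] using this

end Dia

lemma S_le_evalD (hA : 2 ≤ Fintype.card A) {f : (Fin n → Dia A) → ℝ} {z : Fin n → A → ℝ}
    (hz0 : ∀ i a, z i a ≤ 0) (hz : InP f z) (y : Fin n → Dia A) :
    ∑ i, (sInf (Set.range (z i)) + sSup (Set.range (z i))) ≤ f y := by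
  refine le_trans ?_ (hz y)
  exact Finset.sum_le_sum fun i _ => Dia.row_le_gval hA (hz0 i) (y i)

end Dev3
section Dev4
set_option linter.unusedSectionVars false
variable {A : Type} [DecidableEq A] [Fintype A] {n : ℕ}

lemma snoc_inf (y y' : Fin n → Dia A) (d d' : Dia A) :
    (Fin.snoc y d ⊓ Fin.snoc y' d' : Fin (n+1) → Dia A) = Fin.snoc (y ⊓ y') (d ⊓ d') := by
  funext i
  refine Fin.lastCases ?_ ?_ i <;> simp [Pi.inf_apply, Fin.snoc_last, Fin.snoc_castSucc]

lemma snoc_sup (y y' : Fin n → Dia A) (d d' : Dia A) :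
    (Fin.snoc y d ⊔ Fin.snoc y' d' : Fin (n+1) → Dia A) = Fin.snoc (y ⊔ y') (d ⊔ d') := by
  funext i
  refine Fin.lastCases ?_ ?_ i <;> simp [Pi.sup_apply, Fin.snoc_last, Fin.snoc_castSucc]

lemma snoc_b0 : (Fin.snoc (fun _ => Dia.bot) Dia.bot : Fin (n+1) → Dia A) = fun _ => Dia.bot := by
  funext i
  refine Fin.lastCases ?_ ?_ i <;> simp [Fin.snoc_last, Fin.snoc_castSucc]

lemma b0_inf (y : Fin n → Dia A) : ((fun _ => Dia.bot) ⊓ y : Fin n → Dia A) = fun _ => Dia.bot := by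
  funext i; simp [Pi.inf_apply]

lemma b0_sup (y : Fin n → Dia A) : ((fun _ => Dia.bot) ⊔ y : Fin n → Dia A) = y := by
  funext i; simp [Pi.sup_apply]

lemma evalD_snoc (z : Fin n → A → ℝ) (v : A → ℝ) (y : Fin (n+1) → Dia A) :
    evalD (Fin.snoc z v) y = evalD z (Fin.init y) + Dia.gval v (y (Fin.last n)) := by
  unfold evalD
  rw [Fin.sum_univ_castSucc]
  congr 1
  · apply Finset.sum_congr rfl
    intro i _
    rw [Fin.snoc_castSucc]
    rfl
  · rw [Fin.snoc_last]

lemma sum_snoc (z : Fin n → A → ℝ) (v : A → ℝ) (h : (A → ℝ) → ℝ) :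
    ∑ i : Fin (n+1), h ((Fin.snoc z v : Fin (n+1) → A → ℝ) i) = (∑ i : Fin n, h (z i)) + h v := by
  rw [Fin.sum_univ_castSucc]
  congr 1
  · exact Finset.sum_congr rfl fun i _ => by rw [Fin.snoc_castSucc]
  · rw [Fin.snoc_last]

end Dev4
section Dev5
set_option linter.unusedSectionVars false
set_option maxHeartbeats 1000000
variable {A : Type} [DecidableEq A] [Fintype A]

lemma key (hA : 3 ≤ Fintype.card A) :
    ∀ (n : ℕ) (f : (Fin n → Dia A) → ℝ), Submod f → f (fun _ => Dia.bot) = 0 →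
    ∃ z : Fin n → A → ℝ, InP f z ∧ (∀ i a, z i a ≤ 0) ∧
      ∃ y, ∑ i, (sInf (Set.range (z i)) + sSup (Set.range (z i))) = f y := by
  have hA2 : 2 ≤ Fintype.card A := by omega
  have hNeA : Nonempty A := Fintype.card_pos_iff.mp (by omega)
  have hNtA : Nontrivial A := Fintype.one_lt_card_iff_nontrivial.mp hA2
  intro n
  induction n with
  | zero =>
    intro f hf h0
    refine ⟨fun i => i.elim0, ?_, fun i => i.elim0, ⟨fun _ => Dia.bot, ?_⟩⟩
    · intro y
      have : y = fun _ => Dia.bot := funext fun i => i.elim0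
      rw [this, h0]
      simp [evalD]
    · rw [h0]; simp
  | succ n IH =>
    intro f hf h0
    have hfin : Finite (Fin n → Dia A) := by infer_instance
    have hne : Nonempty (Fin n → Dia A) := ⟨fun _ => Dia.bot⟩
    -- minimizers in each slice
    have hYd : ∀ d : Dia A, ∃ y0 : Fin n → Dia A, ∀ y, f (Fin.snoc y0 d) ≤ f (Fin.snoc y d) :=
      fun d => Finite.exists_min (fun y => f (Fin.snoc y d))
    choose Y hY using hYd
    set b0 : Fin n → Dia A := fun _ => Dia.bot with hb0
    set g : Dia A → ℝ := fun d => f (Fin.snoc (Y d) d) with hg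
    set B : Dia A → ℝ := fun d => f (Fin.snoc b0 d) with hB
    have hBbot : B Dia.bot = 0 := by
      rw [hB]; dsimp only; rw [hb0, snoc_b0]; exact h0
    have hgB : ∀ d, g d ≤ B d := fun d => hY d b0
    -- the mixed submodularity fact h3
    have h3 : ∀ d d' : Dia A, B (d ⊓ d') + g (d ⊔ d') ≤ B d + g d' := by
      intro d d'
      have hsub := hf (Fin.snoc b0 d) (Fin.snoc (Y d') d')
      rw [snoc_inf, snoc_sup, b0_inf, b0_sup] at hsub
      have h2 : g (d ⊔ d') ≤ f (Fin.snoc (Y d') (d ⊔ d')) := hY _ _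
      calc B (d ⊓ d') + g (d ⊔ d')
          ≤ f (Fin.snoc b0 (d ⊓ d')) + f (Fin.snoc (Y d') (d ⊔ d')) := by
            rw [hB]; exact add_le_add le_rfl h2
        _ ≤ f (Fin.snoc b0 d) + f (Fin.snoc (Y d') d') := hsub
        _ = B d + g d' := rfl
    -- global minimum of g
    obtain ⟨dW, hdW⟩ := Finite.exists_min g
    set W : ℝ := g dW with hWdef
    have hW : ∀ d, W ≤ g d := hdW
    -- the peak atom
    obtain ⟨q, hq⟩ := Finite.exists_max (fun a => g (Dia.atom a))
    obtain ⟨a0, ha0⟩ := exists_ne q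
    -- row construction
    set Ls : ℝ := W - g (Dia.atom q) with hLs
    set t : ℝ := min 0 (min (B (Dia.atom q)) (B Dia.top - Ls)) with ht
    set s : ℝ := max Ls (W - g Dia.bot - t) with hs
    set v : A → ℝ := fun a => if a = q then t else s with hv
    -- basic t facts
    have ht0 : t ≤ 0 := min_le_left _ _
    have htq : t ≤ B (Dia.atom q) := le_trans (min_le_right _ _) (min_le_left _ _)
    have htt : t ≤ B Dia.top - Ls := le_trans (min_le_right _ _) (min_le_right _ _)
    have htlow : ∀ r : ℝ, r ≤ 0 → r ≤ B (Dia.atom q) → r ≤ B Dia.top - Ls → r ≤ t := by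
      intro r h1 h2 h3
      rw [ht]; exact le_min h1 (le_min h2 h3)
    -- h3 instances
    have I1 : ∀ a : A, a ≠ q → g Dia.top ≤ B (Dia.atom q) + g (Dia.atom a) := by
      intro a ha
      have := h3 (Dia.atom q) (Dia.atom a)
      rwa [Dia.atom_inf_atom (fun h => ha h.symm), Dia.atom_sup_atom (fun h => ha h.symm),
        hBbot, zero_add] at this
    have I2 : ∀ a : A, a ≠ q → g Dia.top ≤ B (Dia.atom a) + g (Dia.atom q) := by
      intro a ha
      have := h3 (Dia.atom a) (Dia.atom q)
      rwa [Dia.atom_inf_atom ha, Dia.atom_sup_atom ha, hBbot, zero_add] at this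
    have I3a : ∀ a : A, g (Dia.atom a) ≤ B (Dia.atom a) + g Dia.bot := by
      intro a
      have := h3 (Dia.atom a) Dia.bot
      rwa [Dia.inf_bot, Dia.sup_bot, hBbot, zero_add] at this
    have I4 : g Dia.top ≤ B Dia.top + g Dia.bot := by
      have := h3 Dia.top Dia.bot
      rwa [Dia.inf_bot, Dia.sup_bot, hBbot, zero_add] at this
    have I5 : ∀ a : A, B (Dia.atom a) + g Dia.top ≤ B Dia.top + g (Dia.atom a) := by
      intro a
      have := h3 Dia.top (Dia.atom a)
      rwa [Dia.top_inf, Dia.top_sup] at this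
    -- key bounds
    have hWb : W ≤ g Dia.bot := hW _
    have hWt : W ≤ g Dia.top := hW _
    have hWq : W ≤ g (Dia.atom q) := hW _
    have hqa : ∀ a, g (Dia.atom a) ≤ g (Dia.atom q) := hq
    -- t lower bounds
    have htWb : W - g Dia.bot ≤ t := by
      apply htlow <;>
        [linarith; linarith [I3a q]; linarith [I4, hWt, hWq]]
    have hs0 : s ≤ 0 := by
      rw [hs]; apply max_le <;> [skip; linarith]
      rw [hLs]; linarith
    have hst : s ≤ t := by
      rw [hs]; apply max_le
      · apply htlow
        · rw [hLs]; linarith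
        · rw [hLs]; linarith [I1 a0 ha0, hqa a0]
        · rw [hLs]; linarith [I5 a0, I2 a0 ha0, hqa a0, hWt]
      · -- W - g bot - t ≤ t, i.e. 2t ≥ W - g bot : show (W - g bot)/2 ≤ t
        have : (W - g Dia.bot) / 2 ≤ t := by
          apply htlow
          · linarith
          · linarith [I1 a0 ha0, I3a q, hqa a0]
          · rw [hLs]; linarith [I4, hWt, I5 a0, I2 a0 ha0, hqa a0]
        linarith
    -- v bounds vs B
    have hvB : ∀ d : Dia A, Dia.gval v d ≤ B d := by
      intro d
      cases d with
      | bot => rw [hBbot]; simp [Dia.gval]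
      | atom a =>
        show v a ≤ B (Dia.atom a)
        rw [hv]; dsimp only
        split_ifs with hqa'
        · subst hqa'; exact htq
        · rw [hs]; apply max_le
          · rw [hLs]; linarith [I2 a hqa', hWt]
          · have : W - g Dia.bot - B (Dia.atom a) ≤ t := by
              apply htlow
              · linarith [I3a a, hW (Dia.atom a)]
              · linarith [I1 a hqa', I3a a]
              · rw [hLs]; linarith [I2 a hqa', I4, hWt]
            linarith
      | top =>
        rw [hv, Dia.two_level_gval_top hA2 hst]
        rcases max_choice Ls (W - g Dia.bot - t) with h | h
        · rw [hs, h]; linarith [htt]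
        · rw [hs, h]; linarith [I4, hWt]
    -- (III) inequalities
    have hIII : ∀ d : Dia A, W - (t + s) ≤ g d - Dia.gval v d := by
      intro d
      cases d with
      | bot =>
        simp only [Dia.gval]
        have : W - g Dia.bot - t ≤ s := le_max_right _ _
        linarith
      | atom a =>
        show W - (t + s) ≤ g (Dia.atom a) - v a
        rw [hv]; dsimp only
        split_ifs with hqa'
        · subst hqa'
          have : Ls ≤ s := le_max_left _ _
          rw [hLs] at this; linarith
        · have : W - g (Dia.atom a) ≤ t := by
            apply htlow
            · linarith [hW (Dia.atom a)]
            · linarith [I1 a hqa']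
            · rw [hLs]; linarith [I5 a, I2 a hqa', hWt]
          linarith
      | top =>
        rw [hv, Dia.two_level_gval_top hA2 hst]
        linarith [hWt]
    -- (III) equality
    have hIIIeq : ∃ d : Dia A, g d - Dia.gval v d = W - (t + s) := by
      rcases max_choice Ls (W - g Dia.bot - t) with h | h
      · refine ⟨Dia.atom q, ?_⟩
        have hvq : v q = t := by rw [hv]; simp
        show g (Dia.atom q) - v q = _
        rw [hvq, hs, h, hLs]; ring
      · refine ⟨Dia.bot, ?_⟩
        simp only [Dia.gval]
        rw [hs, h]; ring
    -- the function F
    have hDy : ∀ y : Fin n → Dia A, ∃ d0 : Dia A, ∀ d,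
        f (Fin.snoc y d0) - Dia.gval v d0 ≤ f (Fin.snoc y d) - Dia.gval v d :=
      fun y => Finite.exists_min _
    choose D hD using hDy
    set F : (Fin n → Dia A) → ℝ := fun y => f (Fin.snoc y (D y)) - Dia.gval v (D y) with hF
    have hFle : ∀ y d, F y ≤ f (Fin.snoc y d) - Dia.gval v d := hD
    have hFsub : Submod F := by
      intro y y'
      have h1 : F (y ⊓ y') ≤ f (Fin.snoc (y ⊓ y') (D y ⊓ D y')) - Dia.gval v (D y ⊓ D y') :=
        hFle _ _
      have h2 : F (y ⊔ y') ≤ f (Fin.snoc (y ⊔ y') (D y ⊔ D y')) - Dia.gval v (D y ⊔ D y') :=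
        hFle _ _
      have h4 := hf (Fin.snoc y (D y)) (Fin.snoc y' (D y'))
      rw [snoc_inf, snoc_sup] at h4
      have h5 := Dia.gval_supermod v (D y) (D y')
      have e1 : F y = f (Fin.snoc y (D y)) - Dia.gval v (D y) := rfl
      have e2 : F y' = f (Fin.snoc y' (D y')) - Dia.gval v (D y') := rfl
      linarith
    have hF0 : F b0 = 0 := by
      apply le_antisymm
      · have := hFle b0 Dia.bot
        rw [snoc_b0] at this
        simpa [Dia.gval, h0] using this
      · have h1 : B (D b0) - Dia.gval v (D b0) ≤ F b0 := le_rfl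
        have := hvB (D b0)
        linarith
    -- lower bound for F
    have hFlow : ∀ y, W - (t + s) ≤ F y := by
      intro y
      have h1 : g (D y) ≤ f (Fin.snoc y (D y)) := hY _ _
      have h2 := hIII (D y)
      have e1 : F y = f (Fin.snoc y (D y)) - Dia.gval v (D y) := rfl
      linarith
    have hFeq : ∃ y, F y = W - (t + s) := by
      obtain ⟨d1, hd1⟩ := hIIIeq
      refine ⟨Y d1, le_antisymm ?_ (hFlow _)⟩
      have := hFle (Y d1) d1
      rw [← hd1]
      exact this
    -- apply IH
    obtain ⟨z', hz'P, hz'0, y0, hy0⟩ := IH F hFsub hF0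
    have hSz' : (∑ i, (sInf (Set.range (z' i)) + sSup (Set.range (z' i)))) = W - (t + s) := by
      obtain ⟨y1, hy1⟩ := hFeq
      have hub := S_le_evalD hA2 hz'0 hz'P y1
      have hlb := hFlow y0
      rw [hy1] at hub
      linarith [hy0 ▸ hlb]
    -- assemble
    refine ⟨Fin.snoc z' v, ?_, ?_, ⟨Fin.snoc (Y dW) dW, ?_⟩⟩
    · intro y
      rw [evalD_snoc]
      have h1 : evalD z' (Fin.init y) ≤ F (Fin.init y) := hz'P _
      have h2 : F (Fin.init y) ≤ f (Fin.snoc (Fin.init y) (y (Fin.last n)))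
          - Dia.gval v (y (Fin.last n)) := hFle _ _
      rw [Fin.snoc_init_self] at h2
      linarith
    · intro i a
      refine Fin.lastCases ?_ ?_ i
      · rw [Fin.snoc_last]
        rw [hv]; dsimp only; split_ifs
        · exact ht0
        · exact hs0
      · intro j
        rw [Fin.snoc_castSucc]
        exact hz'0 j a
    · rw [sum_snoc z' v (fun w => sInf (Set.range w) + sSup (Set.range w))]
      rw [hSz']
      have e1 : sInf (Set.range v) = s := by rw [hv]; exact Dia.two_level_sInf hA2 hst
      have e2 : sSup (Set.range v) = t := by rw [hv]; exact Dia.two_level_sSup hA2 hst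
      rw [e1, e2]
      show W - (t + s) + (s + t) = g dW
      rw [hWdef]; ring
end Dev5
theorem stmt8' {A : Type} [DecidableEq A] {n : ℕ} [Fintype A] (hA : 3 ≤ Fintype.card A)
    (f : (Fin n → Dia A) → ℝ) (hf : Submod f)
    (h0 : f (fun _ => Dia.bot) = 0) :
    ∃ m : ℝ, IsLeast (Set.range f) m ∧
      IsGreatest {r : ℝ | ∃ z : Fin n → A → ℝ, InP f z ∧ (∀ i a, z i a ≤ 0) ∧
        r = ∑ i, (sInf (Set.range (z i)) + sSup (Set.range (z i)))} m := by
  have hA2 : 2 ≤ Fintype.card A := by omega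
  have hfin : Finite (Fin n → Dia A) := by infer_instance
  have hne : Nonempty (Fin n → Dia A) := ⟨fun _ => Dia.bot⟩
  obtain ⟨ym, hym⟩ := Finite.exists_min f
  obtain ⟨z, hzP, hz0, y1, hy1⟩ := key hA n f hf h0
  refine ⟨f ym, ⟨⟨ym, rfl⟩, ?_⟩, ⟨z, hzP, hz0, ?_⟩, ?_⟩
  · rintro r ⟨y, rfl⟩; exact hym y
  · have h1 : (∑ i, (sInf (Set.range (z i)) + sSup (Set.range (z i)))) ≤ f ym :=
      S_le_evalD hA2 hz0 hzP ym
    have h2 := hym y1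
    linarith [hy1]
  · rintro r ⟨z', hz'P, hz'0, rfl⟩
    exact S_le_evalD hA2 hz'0 hz'P ym

/-- min f = max { S(z) : z ∈ P_M(f), z ≤ 0 } where
S(z) = Σ_i (min_a z(i,a) + max_a z(i,a)). -/
theorem stmt8 [Fintype A] (hA : 3 ≤ Fintype.card A)
    (f : (Fin n → Dia A) → ℝ) (hf : Submod f)
    (h0 : f (fun _ => Dia.bot) = 0) :
    ∃ m : ℝ, IsLeast (Set.range f) m ∧
      IsGreatest {r : ℝ | ∃ z : Fin n → A → ℝ, InP f z ∧ (∀ i a, z i a ≤ 0) ∧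
        r = ∑ i, (sInf (Set.range (z i)) + sSup (Set.range (z i)))} m := by
  exact stmt8' hA f hf h0
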